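/- arXiv:math/0702128 — 3 statements merged into one kernel-verified Lean document; each statement's English description precedes it below -/
import Mathlib

section
/- Let φ be a group-like element of k⟨⟨X,Y⟩⟩ satisfying Drinfel'd's pentagon equation φ(t₁₂,t₂₃+t₂₄)φ(t₁₃+t₂₃,t₃₄) = φ(t₂₃,t₃₄)φ(t₁₂+t₁₃,t₂₄+t₃₄)φ(t₁₂,t₂₃) in U𝔞₄. Then φ is commutator group-like, i.e. the coefficients of X and of Y in φ vanish. -/
open scoped BigOperators

/-- Words in the letters `X = 0`, `Y = 1`, ... -/
abbrev Word (n : ℕ) := List (Fin n)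

/-- Coefficient families of non-commutative formal power series `k⟨⟨X₁,…,Xₙ⟩⟩`:
a series is recorded by its coefficient at each word. -/
abbrev NC (k : Type*) (n : ℕ) := Word n → k

/-- The list of shuffles (with multiplicity) of two words. -/
def shuffle {α : Type*} : List α → List α → List (List α)
  | [], v => [v]
  | u, [] => [u]
  | a :: u, b :: v =>
      ((shuffle u (b :: v)).map (a :: ·)) ++ ((shuffle (a :: u) v).map (b :: ·))
  termination_by u v => u.length + v.length
  decreasing_by all_goals simp +arith +decide

variable {k : Type*}

/-- `φ` is group-like for the coproduct with `X`, `Y` primitive: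
`Δφ = φ ⊗ φ` and constant term 1, expressed coefficientwise via shuffles. -/
def IsGroupLike [CommRing k] (φ : NC k 2) : Prop :=
  φ [] = 1 ∧ ∀ u v : Word 2, φ u * φ v = ((shuffle u v).map φ).sum

/-- `φ` is Lie-like (primitive): `Δφ = φ⊗1 + 1⊗φ`, coefficientwise. -/
def IsLieLike [CommRing k] (φ : NC k 2) : Prop :=
  φ [] = 0 ∧ ∀ u v : Word 2, u ≠ [] → v ≠ [] → ((shuffle u v).map φ).sum = 0

/-- commutator group-like: group-like with vanishing coefficients of `X` and `Y`. -/
def IsCommGroupLike [CommRing k] (φ : NC k 2) : Prop :=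
  IsGroupLike φ ∧ φ [0] = 0 ∧ φ [1] = 0

/-- A degree-one element `a·T` of `A[[T]]`, modelling a degree-1 element of a
completed graded algebra. -/
noncomputable def lin {A : Type*} [Ring A] (a : A) : PowerSeries A :=
  PowerSeries.mk fun n => if n = 1 then a else 0

/-- Substitution `φ(X₁, X₂)` of a non-commutative power series `φ` at two
elements (of positive valuation) of a completed graded algebra, where the
completion is modelled by `A[[T]]` (degree `n` part = coefficient of `Tⁿ`). -/
noncomputable def substPS [CommRing k] {A : Type*} [Ring A] [Algebra k A]
    (φ : NC k 2) (P Q : PowerSeries A) : PowerSeries A :=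
  PowerSeries.mk fun n =>
    ∑ m ∈ Finset.range (n + 1), ∑ u : Fin m → Fin 2,
      φ (List.ofFn u) • PowerSeries.coeff (R := A) n (((List.ofFn u).map ![P, Q]).prod)

/-- Exponential of a power series (meaningful when the constant term vanishes). -/
noncomputable def expPS (k : Type*) [Field k] {A : Type*} [Ring A] [Algebra k A]
    (s : PowerSeries A) : PowerSeries A :=
  PowerSeries.mk fun n =>
    ∑ m ∈ Finset.range (n + 1), (Nat.factorial m : k)⁻¹ • PowerSeries.coeff (R := A) n (s ^ m)

/-- Coefficients of the multiplicative inverse of a power series with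
constant term `1`. -/
noncomputable def invCoeff {A : Type*} [Ring A] (s : PowerSeries A) : ℕ → A
  | 0 => 1
  | n + 1 => -∑ j : Fin (n + 1), invCoeff s j.1 * PowerSeries.coeff (R := A) (n + 1 - j.1) s
  termination_by n => n
  decreasing_by exact j.2

/-- Inverse of a power series with constant term `1`. -/
noncomputable def PSInv {A : Type*} [Ring A] (s : PowerSeries A) : PowerSeries A :=
  PowerSeries.mk (invCoeff s)

/-- Relations presenting (the enveloping algebra of) the pure sphere braid Lie
algebra `𝔓₅` on 5 strings. -/
inductive P5Rel (k : Type*) [CommRing k] :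
    FreeAlgebra k (Fin 5 × Fin 5) → FreeAlgebra k (Fin 5 × Fin 5) → Prop
  | diag (i : Fin 5) : P5Rel k (FreeAlgebra.ι k (i, i)) 0
  | symm (i j : Fin 5) : P5Rel k (FreeAlgebra.ι k (i, j)) (FreeAlgebra.ι k (j, i))
  | rowsum (i : Fin 5) : P5Rel k (∑ j : Fin 5, FreeAlgebra.ι k (i, j)) 0
  | disj (i j l m : Fin 5) (h : i ≠ l ∧ i ≠ m ∧ j ≠ l ∧ j ≠ m) :
      P5Rel k (FreeAlgebra.ι k (i, j) * FreeAlgebra.ι k (l, m))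
              (FreeAlgebra.ι k (l, m) * FreeAlgebra.ι k (i, j))

/-- The (graded) enveloping algebra `U𝔓₅` of the pure sphere braid Lie algebra. -/
abbrev P5A (k : Type*) [CommRing k] := RingQuot (P5Rel k)

/-- The generator `X_{ij}` of `U𝔓₅`. -/
noncomputable def Xg (k : Type*) [CommRing k] (i j : Fin 5) : P5A k :=
  RingQuot.mkAlgHom k (P5Rel k) (FreeAlgebra.ι k (i, j))

/-- Relations presenting (the enveloping algebra of) the infinitesimal braid
("chord diagram") Lie algebra `𝔞ₙ`. -/
inductive ARel (k : Type*) [CommRing k] (n : ℕ) :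
    FreeAlgebra k (Fin n × Fin n) → FreeAlgebra k (Fin n × Fin n) → Prop
  | diag (i : Fin n) : ARel k n (FreeAlgebra.ι k (i, i)) 0
  | symm (i j : Fin n) : ARel k n (FreeAlgebra.ι k (i, j)) (FreeAlgebra.ι k (j, i))
  | comm3 (i j l : Fin n) (h : i ≠ j ∧ i ≠ l ∧ j ≠ l) :
      ARel k n (FreeAlgebra.ι k (i, j) * (FreeAlgebra.ι k (i, l) + FreeAlgebra.ι k (j, l)))
               ((FreeAlgebra.ι k (i, l) + FreeAlgebra.ι k (j, l)) * FreeAlgebra.ι k (i, j))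
  | comm4 (i j l m : Fin n)
      (h : i ≠ j ∧ i ≠ l ∧ i ≠ m ∧ j ≠ l ∧ j ≠ m ∧ l ≠ m) :
      ARel k n (FreeAlgebra.ι k (i, j) * FreeAlgebra.ι k (l, m))
               (FreeAlgebra.ι k (l, m) * FreeAlgebra.ι k (i, j))

/-- The (graded) enveloping algebra `U𝔞ₙ`. -/
abbrev AA (k : Type*) [CommRing k] (n : ℕ) := RingQuot (ARel k n)

/-- The generator `t_{ij}` of `U𝔞ₙ`. -/
noncomputable def tg (k : Type*) [CommRing k] (n : ℕ) (i j : Fin n) : AA k n :=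
  RingQuot.mkAlgHom k (ARel k n) (FreeAlgebra.ι k (i, j))

/-- The series `X` (i.e. the image of the first generator) in the model
`(FreeAlgebra k (Fin 2))[[T]]` of `k⟨⟨X,Y⟩⟩`. -/
noncomputable def XF (k : Type*) [CommRing k] : PowerSeries (FreeAlgebra k (Fin 2)) :=
  lin (FreeAlgebra.ι k (0 : Fin 2))

/-- The series `Y`. -/
noncomputable def YF (k : Type*) [CommRing k] : PowerSeries (FreeAlgebra k (Fin 2)) :=
  lin (FreeAlgebra.ι k (1 : Fin 2))

/-- The series `Z = -X-Y`. -/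
noncomputable def ZF (k : Type*) [CommRing k] : PowerSeries (FreeAlgebra k (Fin 2)) :=
  -XF k - YF k

/-- `φ(X_{ab}, X_{bc})` in the completed `U𝔓₅`. -/
noncomputable def S5 (k : Type*) [Field k] (φ : NC k 2) (a b c : Fin 5) :
    PowerSeries (P5A k) :=
  substPS φ (lin (Xg k a b)) (lin (Xg k b c))

/-- The multiplicative 5-cycle relation
`φ(X₁₂,X₂₃)φ(X₃₄,X₄₅)φ(X₅₁,X₁₂)φ(X₂₃,X₃₄)φ(X₄₅,X₅₁) = 1` in the completed `U𝔓₅`. -/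
def FiveCycleMul (k : Type*) [Field k] (φ : NC k 2) : Prop :=
  S5 k φ 0 1 2 * S5 k φ 2 3 4 * S5 k φ 4 0 1 * S5 k φ 1 2 3 * S5 k φ 3 4 0 = 1

/-- `t_{ij}` as a degree-one element of the completed `U𝔞₄`. -/
noncomputable def lt (k : Type*) [Field k] (i j : Fin 4) : PowerSeries (AA k 4) :=
  lin (tg k 4 i j)

/-- Drinfel'd's pentagon equation
`φ(t₁₂,t₂₃+t₂₄)φ(t₁₃+t₂₃,t₃₄) = φ(t₂₃,t₃₄)φ(t₁₂+t₁₃,t₂₄+t₃₄)φ(t₁₂,t₂₃)`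
in the completed `U𝔞₄` (strings are `0,1,2,3`). -/
def Pentagon (k : Type*) [Field k] (φ : NC k 2) : Prop :=
  substPS φ (lt k 0 1) (lt k 1 2 + lt k 1 3) * substPS φ (lt k 0 2 + lt k 1 2) (lt k 2 3) =
    substPS φ (lt k 1 2) (lt k 2 3) *
      substPS φ (lt k 0 1 + lt k 0 2) (lt k 1 3 + lt k 2 3) * substPS φ (lt k 0 1) (lt k 1 2)

/-- The 2-cycle relation `φ(X,Y)φ(Y,X) = 1` in `k⟨⟨X,Y⟩⟩`. -/
def TwoCycleMul (k : Type*) [Field k] (φ : NC k 2) : Prop :=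
  substPS φ (XF k) (YF k) * substPS φ (YF k) (XF k) = 1

/-- The 3-cycle relation
`e^{μX/2}φ(Z,X)e^{μZ/2}φ(Y,Z)e^{μY/2}φ(X,Y) = 1`, `Z = -X-Y`, in `k⟨⟨X,Y⟩⟩`. -/
def ThreeCycleMul (k : Type*) [Field k] (μ : k) (φ : NC k 2) : Prop :=
  expPS k ((μ / 2) • XF k) * substPS φ (ZF k) (XF k) * expPS k ((μ / 2) • ZF k) *
      substPS φ (YF k) (ZF k) * expPS k ((μ / 2) • YF k) * substPS φ (XF k) (YF k) = 1

/-- The special 3-cycle relation `φ(Z,X)φ(Y,Z)φ(X,Y) = 1`, `Z = -X-Y`. -/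
def Special3 (k : Type*) [Field k] (φ : NC k 2) : Prop :=
  substPS φ (ZF k) (XF k) * substPS φ (YF k) (ZF k) * substPS φ (XF k) (YF k) = 1

/-- Drinfel'd's first hexagon equation, for elements `a = t₁₂`, `b = t₁₃`, `c = t₂₃`:
`exp(μ(t₁₃+t₂₃)/2) = φ(t₁₃,t₁₂)exp(μt₁₃/2)φ(t₁₃,t₂₃)⁻¹exp(μt₂₃/2)φ(t₁₂,t₂₃)`. -/
def Hex1 (k : Type*) [Field k] {A : Type*} [Ring A] [Algebra k A]
    (μ : k) (φ : NC k 2) (a b c : A) : Prop :=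
  expPS k ((μ / 2) • (lin b + lin c)) =
    substPS φ (lin b) (lin a) * expPS k ((μ / 2) • lin b) * PSInv (substPS φ (lin b) (lin c)) *
      expPS k ((μ / 2) • lin c) * substPS φ (lin a) (lin c)

/-- Drinfel'd's second hexagon equation, for elements `a = t₁₂`, `b = t₁₃`, `c = t₂₃`:
`exp(μ(t₁₂+t₁₃)/2) = φ(t₂₃,t₁₃)⁻¹exp(μt₁₃/2)φ(t₁₂,t₁₃)exp(μt₁₂/2)φ(t₁₂,t₂₃)⁻¹`. -/
def Hex2 (k : Type*) [Field k] {A : Type*} [Ring A] [Algebra k A]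
    (μ : k) (φ : NC k 2) (a b c : A) : Prop :=
  expPS k ((μ / 2) • (lin a + lin b)) =
    PSInv (substPS φ (lin c) (lin b)) * expPS k ((μ / 2) • lin b) * substPS φ (lin a) (lin b) *
      expPS k ((μ / 2) • lin a) * PSInv (substPS φ (lin a) (lin c))

section Aux

variable {A : Type*}

lemma coeff_lin [Ring A] (a : A) (n : ℕ) :
    PowerSeries.coeff (R := A) n (lin a) = if n = 1 then a else 0 := by
  simp [lin]

lemma substPS_coeff_zero [CommRing k] [Ring A] [Algebra k A] (φ : NC k 2)
    (P Q : PowerSeries A) (h : φ [] = 1) :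
    PowerSeries.coeff (R := A) 0 (substPS φ P Q) = 1 := by
  simp [substPS, h]

lemma substPS_coeff_one [CommRing k] [Ring A] [Algebra k A] (φ : NC k 2)
    (P Q : PowerSeries A) :
    PowerSeries.coeff (R := A) 1 (substPS φ P Q) =
      φ [0] • PowerSeries.coeff (R := A) 1 P + φ [1] • PowerSeries.coeff (R := A) 1 Q := by
  rw [substPS, PowerSeries.coeff_mk,
    show (Finset.range 2) = {0, 1} by decide,
    Finset.sum_insert (by decide), Finset.sum_singleton]
  have h0 : (∑ u : Fin 0 → Fin 2,
      φ (List.ofFn u) • PowerSeries.coeff (R := A) 1 (((List.ofFn u).map ![P, Q]).prod)) = 0 := by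
    simp
  rw [h0, zero_add]
  rw [Fintype.sum_equiv (Equiv.funUnique (Fin 1) (Fin 2))
    (fun u => φ (List.ofFn u) • PowerSeries.coeff (R := A) 1 (((List.ofFn u).map ![P, Q]).prod))
    (fun i => φ [i] • PowerSeries.coeff (R := A) 1 (![P, Q] i))
    (fun u => by simp [List.ofFn_succ])]
  rw [Fin.sum_univ_two]
  simp

lemma coeff_one_mul' [Ring A] (f g : PowerSeries A)
    (hf : PowerSeries.coeff (R := A) 0 f = 1) (hg : PowerSeries.coeff (R := A) 0 g = 1) :
    PowerSeries.coeff (R := A) 1 (f * g) = PowerSeries.coeff (R := A) 1 f + PowerSeries.coeff (R := A) 1 g := by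
  rw [PowerSeries.coeff_mul,
    show (Finset.HasAntidiagonal.antidiagonal 1 : Finset (ℕ × ℕ)) = {(0, 1), (1, 0)} by decide,
    Finset.sum_insert (by decide), Finset.sum_singleton]
  simp only [hf, hg, one_mul, mul_one]
  rw [add_comm]

lemma coeff_zero_mul' [Ring A] (f g : PowerSeries A)
    (hf : PowerSeries.coeff (R := A) 0 f = 1) (hg : PowerSeries.coeff (R := A) 0 g = 1) :
    PowerSeries.coeff (R := A) 0 (f * g) = 1 := by
  simp only [PowerSeries.coeff_zero_eq_constantCoeff] at *
  rw [map_mul, hf, hg, one_mul]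

/-- Evaluation of `U𝔞₄` into `k` given a symmetric zero-diagonal matrix. -/
noncomputable def evA [CommRing k] (c : Fin 4 → Fin 4 → k)
    (hsym : ∀ i j, c i j = c j i) (hdiag : ∀ i, c i i = 0) : AA k 4 →ₐ[k] k :=
  RingQuot.liftAlgHom k ⟨FreeAlgebra.lift k (fun p => c p.1 p.2), by
    intro x y h
    cases h with
    | diag i => simp [hdiag]
    | symm i j => simp [hsym i j]
    | comm3 i j l h => simp only [map_mul, map_add, FreeAlgebra.lift_ι_apply]; ring
    | comm4 i j l m h => simp only [map_mul, FreeAlgebra.lift_ι_apply]; ring⟩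

lemma evA_tg [CommRing k] (c : Fin 4 → Fin 4 → k)
    (hsym : ∀ i j, c i j = c j i) (hdiag : ∀ i, c i i = 0) (i j : Fin 4) :
    evA c hsym hdiag (tg k 4 i j) = c i j := by
  rw [tg, evA, RingQuot.liftAlgHom_mkAlgHom_apply, FreeAlgebra.lift_ι_apply]

end Aux

/-- If a group-like `φ ∈ k⟨⟨X,Y⟩⟩` satisfies Drinfel'd's pentagon equation in
the completed `U𝔞₄`, then `φ` is commutator group-like: the coefficients of
`X` and of `Y` in `φ` vanish. -/
theorem statement7 (k : Type*) [Field k] [CharZero k] (φ : NC k 2)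
    (hφ : IsGroupLike φ) (hpent : Pentagon k φ) :
    φ [0] = 0 ∧ φ [1] = 0 := by
  obtain ⟨h1, -⟩ := hφ
  have E := congrArg (PowerSeries.coeff (R := AA k 4) 1) hpent
  have hz : ∀ P Q : PowerSeries (AA k 4),
      PowerSeries.coeff (R := AA k 4) 0 (substPS φ P Q) = 1 :=
    fun P Q => substPS_coeff_zero φ P Q h1
  rw [coeff_one_mul' _ _ (hz _ _) (hz _ _),
    coeff_one_mul' _ _ (coeff_zero_mul' _ _ (hz _ _) (hz _ _)) (hz _ _),
    coeff_one_mul' _ _ (hz _ _) (hz _ _)] at E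
  simp only [substPS_coeff_one, lt, map_add, coeff_lin, if_true, eq_self_iff_true] at E
  constructor
  · have E1 := congrArg (evA (k := k)
      (fun i j => if (i = 0 ∧ j = 1) ∨ (i = 1 ∧ j = 0) then 1 else 0)
      (fun i j => if_congr (by tauto) rfl rfl)
      (fun i => if_neg (by rintro (⟨h, h'⟩ | ⟨h, h'⟩) <;> subst h <;> exact absurd h' (by decide)))) E
    simp only [map_add, map_smul, evA_tg] at E1
    norm_num [Fin.ext_iff, show ((3:Fin 4):ℕ) = 3 from rfl, show ((2:Fin 4):ℕ) = 2 from rfl] at E1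
    linear_combination E1
  · have E1 := congrArg (evA (k := k)
      (fun i j => if (i = 2 ∧ j = 3) ∨ (i = 3 ∧ j = 2) then 1 else 0)
      (fun i j => if_congr (by tauto) rfl rfl)
      (fun i => if_neg (by rintro (⟨h, h'⟩ | ⟨h, h'⟩) <;> subst h <;> exact absurd h' (by decide)))) E
    simp only [map_add, map_smul, evA_tg] at E1
    norm_num [Fin.ext_iff, show ((3:Fin 4):ℕ) = 3 from rfl, show ((2:Fin 4):ℕ) = 2 from rfl] at E1
    linear_combination E1
end

section
/- Let φ be a commutator group-like element of k⟨⟨X,Y⟩⟩ satisfying the 5-cycle relation φ(X₁₂,X₂₃)φ(X₃₄,X₄₅)φ(X₅₁,X₁₂)φ(X₂₃,X₃₄)φ(X₄₅,X₅₁)=1 in the completed universal enveloping algebra U𝔓₅ of the pure sphere braid Lie algebra on 5 strings. Then φ satisfies the 2-cycle relation φ(X,Y)φ(Y,X)=1 in k⟨⟨X,Y⟩⟩. -/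
open scoped BigOperators

variable {k : Type*}

section AuxShuffle

lemma shuffle_ne_nil {α : Type*} (u v : List α) : shuffle u v ≠ [] := by
  induction u, v using shuffle.induct with
  | case1 v => simp [shuffle]
  | case2 u hu =>
    obtain ⟨a, u, rfl⟩ := List.exists_cons_of_ne_nil (fun h => hu h)
    simp [shuffle]
  | case3 a u b v ih1 ih2 => simp [shuffle, ih1]

lemma mem_shuffle {α : Type*} : ∀ (u v : List α), ∀ l ∈ shuffle u v,
    l.length = u.length + v.length ∧ ∀ y ∈ l, y ∈ u ∨ y ∈ v := by
  intro u v
  induction u, v using shuffle.induct with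
  | case1 v => intro l hl; rw [shuffle] at hl; simp at hl; subst hl; simp
  | case2 u hu =>
    intro l hl
    obtain ⟨a, u, rfl⟩ := List.exists_cons_of_ne_nil (fun h => hu h)
    simp only [shuffle, List.mem_singleton] at hl; subst hl; simp
  | case3 a u b v ih1 ih2 =>
    intro l hl
    rw [shuffle] at hl
    simp only [List.mem_append, List.mem_map] at hl
    rcases hl with ⟨l', hl', rfl⟩ | ⟨l', hl', rfl⟩
    · obtain ⟨h1, h2⟩ := ih1 l' hl'
      refine ⟨by simp [h1]; omega, ?_⟩
      intro y hy
      rcases List.mem_cons.mp hy with rfl | hy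
      · simp
      · rcases h2 y hy with h | h
        · exact Or.inl (List.mem_cons_of_mem _ h)
        · exact Or.inr h
    · obtain ⟨h1, h2⟩ := ih2 l' hl'
      refine ⟨by simp [h1]; omega, ?_⟩
      intro y hy
      rcases List.mem_cons.mp hy with rfl | hy
      · simp
      · rcases h2 y hy with h | h
        · exact Or.inl h
        · exact Or.inr (List.mem_cons_of_mem _ h)

lemma phi_replicate {k : Type*} [Field k] [CharZero k] {φ : NC k 2} (hg : IsGroupLike φ)
    {x : Fin 2} (hx : φ [x] = 0) : ∀ m : ℕ, m ≠ 0 → φ (List.replicate m x) = 0 := by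
  intro m hm
  obtain ⟨n, rfl⟩ := Nat.exists_eq_succ_of_ne_zero hm
  have key := hg.2 [x] (List.replicate n x)
  rw [hx, zero_mul] at key
  set S := shuffle [x] (List.replicate n x) with hS
  have hall : ∀ c ∈ S.map φ, c = φ (List.replicate (n+1) x) := by
    intro c hc
    obtain ⟨l, hl, rfl⟩ := List.mem_map.mp hc
    obtain ⟨h1, h2⟩ := mem_shuffle _ _ l hl
    have hlx : ∀ y ∈ l, y = x := by
      intro y hy
      rcases h2 y hy with h | h
      · simpa using h
      · exact List.eq_of_mem_replicate h
    have : l = List.replicate (n+1) x := by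
      have := List.eq_replicate_of_mem hlx
      rwa [h1, List.length_replicate, Nat.add_comm] at this
    rw [this]
  have hsum : (S.map φ).sum = (S.map φ).length • φ (List.replicate (n+1) x) :=
    List.sum_eq_card_nsmul _ _ hall
  have hlen : (S.map φ).length ≠ 0 := by
    simp only [List.length_map, ne_eq, List.length_eq_zero_iff]
    exact shuffle_ne_nil _ _
  rw [hsum] at key
  have : ((S.map φ).length : k) * φ (List.replicate (n+1) x) = 0 := by
    rw [← nsmul_eq_mul]; exact key.symm
  rcases mul_eq_zero.mp this with h | h
  · exact absurd (Nat.cast_eq_zero.mp h) hlen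
  · exact h

end AuxShuffle

section AuxSubst

variable {k : Type*} [Field k] [CharZero k] {A B : Type*} [Ring A] [Algebra k A]

lemma lin_zero : lin (0 : A) = 0 := by
  ext n
  simp [lin]

lemma substPS_zero_right {φ : NC k 2} (hφ : IsCommGroupLike φ) (P : PowerSeries A) :
    substPS φ P 0 = 1 := by
  ext n
  rw [substPS, PowerSeries.coeff_mk]
  rw [Finset.sum_eq_single 0]
  · have : ∀ u : Fin 0 → Fin 2, φ (List.ofFn u) •
        (PowerSeries.coeff (R := A) n) (((List.ofFn u).map ![P, 0]).prod) = PowerSeries.coeff (R := A) n 1 := by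
      intro u
      rw [List.ofFn_zero]
      simp [hφ.1.1]
    rw [Finset.sum_congr rfl (fun u _ => this u)]
    simp
  · intro m _ hm0
    apply Finset.sum_eq_zero
    intro u _
    by_cases hu : ∀ i, u i = 0
    · have hofn : List.ofFn u = List.replicate m 0 := by
        rw [show u = fun _ => (0 : Fin 2) from funext hu]
        exact List.ofFn_const m 0
      rw [hofn, phi_replicate hφ.1 hφ.2.1 m hm0, zero_smul]
    · push_neg at hu
      obtain ⟨i, hi⟩ := hu
      have hi1 : u i = 1 := by omega
      have hmem : (0 : PowerSeries A) ∈ (List.ofFn u).map ![P, 0] := by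
        refine List.mem_map.mpr ⟨u i, List.mem_ofFn.mpr ⟨i, rfl⟩, ?_⟩
        rw [hi1]; rfl
      rw [List.prod_eq_zero hmem, map_zero, smul_zero]
  · simp

lemma substPS_zero_left {φ : NC k 2} (hφ : IsCommGroupLike φ) (Q : PowerSeries A) :
    substPS φ 0 Q = 1 := by
  ext n
  rw [substPS, PowerSeries.coeff_mk]
  rw [Finset.sum_eq_single 0]
  · have : ∀ u : Fin 0 → Fin 2, φ (List.ofFn u) •
        (PowerSeries.coeff (R := A) n) (((List.ofFn u).map ![0, Q]).prod) = PowerSeries.coeff (R := A) n 1 := by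
      intro u
      rw [List.ofFn_zero]
      simp [hφ.1.1]
    rw [Finset.sum_congr rfl (fun u _ => this u)]
    simp
  · intro m _ hm0
    apply Finset.sum_eq_zero
    intro u _
    by_cases hu : ∀ i, u i = 1
    · have hofn : List.ofFn u = List.replicate m 1 := by
        rw [show u = fun _ => (1 : Fin 2) from funext hu]
        exact List.ofFn_const m 1
      rw [hofn, phi_replicate hφ.1 hφ.2.2 m hm0, zero_smul]
    · push_neg at hu
      obtain ⟨i, hi⟩ := hu
      have hi1 : u i = 0 := by omega
      have hmem : (0 : PowerSeries A) ∈ (List.ofFn u).map ![0, Q] := by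
        refine List.mem_map.mpr ⟨u i, List.mem_ofFn.mpr ⟨i, rfl⟩, ?_⟩
        rw [hi1]; rfl
      rw [List.prod_eq_zero hmem, map_zero, smul_zero]
  · simp

end AuxSubst

section AuxMap

variable {k : Type*} [CommRing k] {A B : Type*} [Ring A] [Ring B] [Algebra k A] [Algebra k B]

lemma map_lin (F : A →+* B) (a : A) :
    PowerSeries.map F (lin a) = lin (F a) := by
  ext n
  simp [lin, PowerSeries.coeff_map, apply_ite F]

lemma map_substPS (F : A →ₐ[k] B) (φ : NC k 2) (P Q : PowerSeries A) :
    PowerSeries.map F.toRingHom (substPS φ P Q)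
      = substPS φ (PowerSeries.map F.toRingHom P) (PowerSeries.map F.toRingHom Q) := by
  ext n
  rw [substPS, substPS, PowerSeries.coeff_map, PowerSeries.coeff_mk, PowerSeries.coeff_mk,
    map_sum]
  refine Finset.sum_congr rfl fun m _ => ?_
  rw [map_sum]
  refine Finset.sum_congr rfl fun u _ => ?_
  rw [show F.toRingHom (φ (List.ofFn u) •
        (PowerSeries.coeff (R := A) n) ((List.map ![P, Q] (List.ofFn u)).prod))
      = φ (List.ofFn u) • F.toRingHom
        ((PowerSeries.coeff (R := A) n) ((List.map ![P, Q] (List.ofFn u)).prod)) from map_smul F _ _]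
  congr 1
  rw [← PowerSeries.coeff_map]
  congr 1
  rw [map_list_prod (PowerSeries.map F.toRingHom), List.map_map]
  have hfun : (⇑(PowerSeries.map F.toRingHom) ∘ ![P, Q])
      = ![PowerSeries.map F.toRingHom P, PowerSeries.map F.toRingHom Q] := by
    funext i; fin_cases i <;> rfl
  rw [hfun]

end AuxMap

section AuxHom

/-- Index matrix for the projection. `0 ↦ 0`, `1 ↦ X`, `2 ↦ Y`, `3 ↦ -X-Y`. -/
def gm : ℕ → ℕ → Fin 4
  | 0,1 => 1 | 1,0 => 1 | 2,3 => 1 | 3,2 => 1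
  | 1,2 => 2 | 2,1 => 2 | 0,3 => 2 | 3,0 => 2
  | 0,2 => 3 | 2,0 => 3 | 1,3 => 3 | 3,1 => 3
  | _,_ => 0

noncomputable def emb (k : Type*) [CommRing k] : Fin 4 → FreeAlgebra k (Fin 2)
  | 1 => FreeAlgebra.ι k 0
  | 2 => FreeAlgebra.ι k 1
  | 3 => -FreeAlgebra.ι k 0 - FreeAlgebra.ι k 1
  | 0 => 0

def z1 : Fin 4 → ℤ := ![0,1,0,-1]
def z2 : Fin 4 → ℤ := ![0,0,1,-1]

lemma emb_eq (k : Type*) [CommRing k] (c : Fin 4) :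
    emb k c = z1 c • FreeAlgebra.ι k (0 : Fin 2) + z2 c • FreeAlgebra.ι k (1 : Fin 2) := by
  fin_cases c <;> simp [emb, z1, z2, sub_eq_add_neg]

lemma gdisj : ∀ i j l m : Fin 5, i ≠ l → i ≠ m → j ≠ l → j ≠ m →
    gm i.val j.val = gm l.val m.val ∨ gm i.val j.val = 0 ∨ gm l.val m.val = 0 := by decide

noncomputable def Lh (k : Type*) [CommRing k] :
    FreeAlgebra k (Fin 5 × Fin 5) →ₐ[k] FreeAlgebra k (Fin 2) :=
  FreeAlgebra.lift k (fun p => emb k (gm p.1.val p.2.val))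

lemma Lh_rel (k : Type*) [CommRing k] : ∀ ⦃x y⦄, P5Rel k x y → Lh k x = Lh k y := by
  intro x y h
  induction h with
  | diag i =>
    rw [map_zero]
    simp only [Lh, FreeAlgebra.lift_ι_apply]
    have : gm i.val i.val = 0 := by revert i; decide
    rw [this]; rfl
  | symm i j =>
    simp only [Lh, FreeAlgebra.lift_ι_apply]
    have : gm i.val j.val = gm j.val i.val := by revert i j; decide
    rw [this]
  | rowsum i =>
    rw [map_zero, map_sum]
    simp only [Lh, FreeAlgebra.lift_ι_apply]
    have h1 : ∑ j : Fin 5, z1 (gm i.val j.val) = 0 := by revert i; decide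
    have h2 : ∑ j : Fin 5, z2 (gm i.val j.val) = 0 := by revert i; decide
    calc ∑ j : Fin 5, emb k (gm i.val j.val)
        = ∑ j : Fin 5, (z1 (gm i.val j.val) • FreeAlgebra.ι k (0 : Fin 2)
            + z2 (gm i.val j.val) • FreeAlgebra.ι k (1 : Fin 2)) :=
          Finset.sum_congr rfl fun j _ => emb_eq k _
      _ = (∑ j : Fin 5, z1 (gm i.val j.val)) • FreeAlgebra.ι k (0 : Fin 2)
            + (∑ j : Fin 5, z2 (gm i.val j.val)) • FreeAlgebra.ι k (1 : Fin 2) := by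
          rw [Finset.sum_add_distrib, Finset.sum_smul, Finset.sum_smul]
      _ = 0 := by rw [h1, h2]; simp
  | disj i j l m h =>
    rw [map_mul, map_mul]
    simp only [Lh, FreeAlgebra.lift_ι_apply]
    obtain ⟨h1, h2, h3, h4⟩ := h
    rcases gdisj i j l m h1 h2 h3 h4 with he | h0 | h0
    · rw [he]
    · rw [h0, show emb k 0 = 0 from rfl, zero_mul, mul_zero]
    · rw [h0, show emb k 0 = 0 from rfl, zero_mul, mul_zero]

noncomputable def Fh (k : Type*) [CommRing k] : P5A k →ₐ[k] FreeAlgebra k (Fin 2) :=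
  RingQuot.liftAlgHom k ⟨Lh k, Lh_rel k⟩

lemma Fh_Xg (k : Type*) [CommRing k] (i j : Fin 5) :
    Fh k (Xg k i j) = emb k (gm i.val j.val) := by
  rw [Fh, Xg, RingQuot.liftAlgHom_mkAlgHom_apply]
  simp only [Lh, FreeAlgebra.lift_ι_apply]

end AuxHom

/-- If a commutator group-like `φ ∈ k⟨⟨X,Y⟩⟩` satisfies the 5-cycle relation
`φ(X₁₂,X₂₃)φ(X₃₄,X₄₅)φ(X₅₁,X₁₂)φ(X₂₃,X₃₄)φ(X₄₅,X₅₁) = 1` in the completed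
`U𝔓₅`, then it satisfies the 2-cycle relation `φ(X,Y)φ(Y,X) = 1`. -/
theorem statement8 (k : Type*) [Field k] [CharZero k] (φ : NC k 2)
    (hφ : IsCommGroupLike φ) (h5 : FiveCycleMul k φ) :
    TwoCycleMul k φ := by
  have h5' : S5 k φ 0 1 2 * S5 k φ 2 3 4 * S5 k φ 4 0 1 * S5 k φ 1 2 3 * S5 k φ 3 4 0 = 1 := h5
  have h := congrArg (PowerSeries.map (Fh k).toRingHom) h5'
  rw [map_one, map_mul, map_mul, map_mul, map_mul] at h
  simp only [S5] at h
  rw [map_substPS, map_substPS, map_substPS, map_substPS, map_substPS] at h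
  simp only [map_lin] at h
  have ev : ∀ i j : Fin 5, (Fh k).toRingHom (Xg k i j) = emb k (gm i.val j.val) :=
    fun i j => Fh_Xg k i j
  simp only [ev] at h
  rw [show lin (emb k (gm (0:Fin 5).val (1:Fin 5).val)) = XF k from rfl,
      show lin (emb k (gm (1:Fin 5).val (2:Fin 5).val)) = YF k from rfl,
      show lin (emb k (gm (2:Fin 5).val (3:Fin 5).val)) = XF k from rfl,
      show lin (emb k (gm (3:Fin 5).val (4:Fin 5).val))
        = (0 : PowerSeries (FreeAlgebra k (Fin 2))) from lin_zero,
      show lin (emb k (gm (4:Fin 5).val (0:Fin 5).val))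
        = (0 : PowerSeries (FreeAlgebra k (Fin 2))) from lin_zero] at h
  rw [substPS_zero_right hφ (XF k), substPS_zero_left hφ (XF k),
      substPS_zero_right hφ 0, mul_one, mul_one, mul_one] at h
  exact h
end

section
/- Define σ₁,σ₂,σ₃,σ₄ ∈ 𝔖₅ acting on the generators X_{ij} of 𝔓₅ by permuting indices, with σ₁=(id), σ₂ sending (1,2,3,4,5) to (5,4,2,3,1), σ₃ sending (1,2,3,4,5) to (1,3,4,2,5), σ₄ sending (1,2,3,4,5) to (4,3,1,2,5). Let φ be a commutator Lie-like series satisfying the 2-cycle relation φ(X,Y)=−φ(Y,X), let P = φ(X₁₂,X₂₃)+φ(X₃₄,X₄₅)+φ(X₅₁,X₁₂)+φ(X₂₃,X₃₄)+φ(X₄₅,X₅₁) ∈ 𝔓₅, and let R(X,Y)=φ(X,Y)+φ(Y,−X−Y)+φ(−X−Y,X). Then Σ_{i=1}^4 σ_i(P) = R(X₂₁,X₂₃)+R(X₂₁,X₂₅)+R(X₂₄,X₂₃)+R(X₂₄,X₂₅) in 𝔓₅. -/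
open scoped BigOperators

variable {k : Type*}

/-- The "3-cycle defect" `R(A,B) = φ(A,B) + φ(B,-A-B) + φ(-A-B,A)` evaluated
at degree-one elements of the completed `U𝔓₅`. -/
noncomputable def Rdef (k : Type*) [Field k] (φ : NC k 2) (a b : P5A k) :
    PowerSeries (P5A k) :=
  substPS φ (lin a) (lin b) + substPS φ (lin b) (-lin a - lin b) +
    substPS φ (-lin a - lin b) (lin a)

/-- The 5-cycle sum `P` after permuting the strings by `(a,b,c,d,e)`:
`φ(X_{ab},X_{bc}) + φ(X_{cd},X_{de}) + φ(X_{ea},X_{ab}) + φ(X_{bc},X_{cd}) + φ(X_{de},X_{ea})`. -/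
noncomputable def Pt (k : Type*) [Field k] (φ : NC k 2) (a b c d e : Fin 5) :
    PowerSeries (P5A k) :=
  S5 k φ a b c + S5 k φ c d e + S5 k φ e a b + S5 k φ b c d + S5 k φ d e a


namespace Aux13

open List

section Comb

variable {M : Type*} [AddCommMonoid M]

lemma sum_map_add {α : Type*} (l : List α) (f g : α → M) :
    (l.map fun x => f x + g x).sum = (l.map f).sum + (l.map g).sum := by
  induction l with
  | nil => simp
  | cons a l ih => simp only [map_cons, sum_cons, ih]; abel

lemma sum_map_zero' {α : Type*} (l : List α) : (l.map fun _ => (0 : M)).sum = 0 := by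
  induction l with
  | nil => simp
  | cons a l ih => simp [ih]

lemma sum_map_smul {k A : Type*} [Semiring k] [AddCommMonoid A] [Module k A]
    {α : Type*} (l : List α) (f : α → k) (x : A) :
    (l.map fun v => f v • x).sum = ((l.map f).sum) • x := by
  induction l with
  | nil => simp
  | cons a l ih => simp [ih, add_smul]

lemma shuffle_nil_right {α : Type*} (l : List α) : shuffle l [] = [l] := by
  cases l <;> simp [shuffle]

theorem shuffle_map {α β : Type*} (f : α → β) : ∀ (u v : List α),
    (shuffle u v).map (List.map f) = shuffle (u.map f) (v.map f)
  | [], v => by simp [shuffle]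
  | a :: u, [] => by simp [shuffle]
  | a :: u, b :: v => by
    rw [shuffle, List.map_cons, List.map_cons, shuffle, ← List.map_cons (f := f) (a := b) (l := v),
      ← List.map_cons (f := f) (a := a) (l := u), ← shuffle_map f u (b :: v), ← shuffle_map f (a :: u) v]
    simp [Function.comp_def]
  termination_by u v => u.length + v.length
  decreasing_by all_goals simp +arith +decide

/-- All words of length `n` in two letters. -/
def wordsL : ℕ → List (Word 2)
  | 0 => [[]]
  | n + 1 => ((wordsL n).map (List.cons 0)) ++ ((wordsL n).map (List.cons 1))

lemma sum_ofFn_eq (n : ℕ) (f : Word 2 → M) :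
    (∑ u : Fin n → Fin 2, f (List.ofFn u)) = ((wordsL n).map f).sum := by
  induction n generalizing f with
  | zero => simp [wordsL, List.ofFn_zero]
  | succ n ih =>
    rw [← Equiv.sum_comp (Fin.consEquiv (fun _ : Fin (n+1) => Fin 2)) (fun u => f (List.ofFn u)),
      Fintype.sum_prod_type, Fin.sum_univ_two]
    have hc : ∀ (x : Fin 2) (u : Fin n → Fin 2),
        List.ofFn ((Fin.consEquiv (fun _ : Fin (n+1) => Fin 2)) (x, u)) = x :: List.ofFn u := by
      intro x u
      have : (Fin.consEquiv (fun _ : Fin (n+1) => Fin 2)) (x, u) = Fin.cons x u := rfl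
      rw [this, List.ofFn_succ]
      simp
    simp only [hc]
    rw [ih (fun w => f ((0 : Fin 2) :: w)), ih (fun w => f ((1 : Fin 2) :: w))]
    simp [wordsL, Function.comp_def]

def pr3 : Fin 3 → Fin 2 := fun x => if x = 2 then 1 else 0
def emb2 : Fin 2 → Fin 3 := fun x => if x = 0 then 0 else 2

@[simp] lemma pr3_zero : pr3 0 = 0 := by decide
@[simp] lemma pr3_one : pr3 1 = 0 := by decide
@[simp] lemma pr3_two : pr3 2 = 1 := by decide
@[simp] lemma emb2_zero : emb2 0 = 0 := by decide
@[simp] lemma emb2_one : emb2 1 = 2 := by decide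
@[simp] lemma pr3_emb2 (x : Fin 2) : pr3 (emb2 x) = x := by fin_cases x <;> decide

lemma map_pr3_emb2 (r : Word 2) : (r.map emb2).map pr3 = r := by
  rw [List.map_map]
  have : (pr3 ∘ emb2) = id := by funext x; simp [Function.comp]
  rw [this, List.map_id]

def expand : Word 2 → List (Word 3)
  | [] => [[]]
  | x :: u => if x = 0 then ((expand u).map (List.cons 0)) ++ ((expand u).map (List.cons 1))
              else (expand u).map (List.cons 2)

lemma expand_zero_cons (u : Word 2) :
    expand (0 :: u) = ((expand u).map (List.cons 0)) ++ ((expand u).map (List.cons 1)) := by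
  simp [expand]

lemma expand_one_cons (u : Word 2) :
    expand ((1 : Fin 2) :: u) = (expand u).map (List.cons 2) := by
  simp [expand]

lemma map_pr3_of_mem_expand : ∀ (u : Word 2) (v : Word 3), v ∈ expand u → v.map pr3 = u := by
  intro u
  induction u with
  | nil => intro v hv; simp [expand] at hv; simp [hv]
  | cons x u ih =>
    intro v hv
    by_cases hx : x = 0
    · subst hx
      rw [expand_zero_cons] at hv
      rcases List.mem_append.mp hv with h | h <;>
        rcases List.mem_map.mp h with ⟨w, hw, rfl⟩ <;> simp [ih w hw]
    · have hx1 : x = 1 := by omega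
      subst hx1
      rw [expand_one_cons] at hv
      rcases List.mem_map.mp hv with ⟨w, hw, rfl⟩
      simp [ih w hw]

end Comb

end Aux13

namespace Aux13

open List

section Key

variable {M : Type*} [AddCommMonoid M]

/-- inner shuffle sum -/
def ShS (G : Word 3 → M) (s : ℕ) (r : Word 2) : M :=
  ((shuffle (List.replicate s 1) (r.map emb2)).map G).sum

def RowS (G : Word 3 → M) (s t : ℕ) : M := ((wordsL t).map fun r => ShS G s r).sum

def RhsS (G : Word 3 → M) (n : ℕ) : M := ∑ p ∈ Finset.HasAntidiagonal.antidiagonal n, RowS G p.1 p.2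

def LhsS (G : Word 3 → M) (n : ℕ) : M :=
  ((wordsL n).map fun u => ((expand u).map G).sum).sum

lemma ShS_zero (G : Word 3 → M) (r : Word 2) : ShS G 0 r = G (r.map emb2) := by
  simp [ShS, shuffle]

lemma ShS_succ_nil (G : Word 3 → M) (s : ℕ) :
    ShS G (s + 1) [] = ShS (fun v => G (1 :: v)) s [] := by
  simp [ShS, shuffle_nil_right, List.replicate_succ]

lemma ShS_succ_cons (G : Word 3 → M) (s : ℕ) (x : Fin 2) (r' : Word 2) :
    ShS G (s + 1) (x :: r') =
      ShS (fun v => G (1 :: v)) s (x :: r') + ShS (fun v => G (emb2 x :: v)) (s + 1) r' := by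
  simp only [ShS, List.map_cons, List.replicate_succ]
  rw [shuffle]
  simp [List.sum_append, List.map_map, Function.comp_def]

lemma RowS_succ_succ (G : Word 3 → M) (s m : ℕ) :
    RowS G (s + 1) (m + 1) = RowS (fun v => G (1 :: v)) s (m + 1) +
      (RowS (fun v => G (0 :: v)) (s + 1) m + RowS (fun v => G (2 :: v)) (s + 1) m) := by
  simp only [RowS, wordsL, List.map_append, List.sum_append, List.map_map]
  have h0 : ((fun r => ShS G (s + 1) r) ∘ (List.cons (0 : Fin 2))) =
      fun r' => ShS (fun v => G (1 :: v)) s ((0 : Fin 2) :: r') +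
        ShS (fun v => G ((0 : Fin 3) :: v)) (s + 1) r' := by
    funext r'
    simp only [Function.comp_apply]
    rw [ShS_succ_cons]
    simp
  have h1 : ((fun r => ShS G (s + 1) r) ∘ (List.cons (1 : Fin 2))) =
      fun r' => ShS (fun v => G (1 :: v)) s ((1 : Fin 2) :: r') +
        ShS (fun v => G ((2 : Fin 3) :: v)) (s + 1) r' := by
    funext r'
    simp only [Function.comp_apply]
    rw [ShS_succ_cons]
    simp
  rw [h0, h1, sum_map_add, sum_map_add]
  simp only [Function.comp_def]
  abel

lemma RowS_succ_zero (G : Word 3 → M) (s : ℕ) :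
    RowS G (s + 1) 0 = RowS (fun v => G (1 :: v)) s 0 := by
  simp [RowS, wordsL, ShS_succ_nil]

lemma RowS_zero_succ (G : Word 3 → M) (m : ℕ) :
    RowS G 0 (m + 1) = RowS (fun v => G (0 :: v)) 0 m + RowS (fun v => G (2 :: v)) 0 m := by
  simp only [RowS, wordsL, List.map_append, List.sum_append, List.map_map]
  congr 1
  · apply congrArg
    apply List.map_congr_left
    intro r _
    simp only [Function.comp_apply, ShS_zero]
    simp
  · apply congrArg
    apply List.map_congr_left
    intro r _
    simp only [Function.comp_apply, ShS_zero]
    simp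

lemma RhsS_succ (G : Word 3 → M) (n : ℕ) :
    RhsS G (n + 1) = RhsS (fun v => G (1 :: v)) n +
      (RhsS (fun v => G (0 :: v)) n + RhsS (fun v => G (2 :: v)) n) := by
  cases n with
  | zero =>
    simp only [RhsS, Finset.Nat.sum_antidiagonal_succ, Finset.Nat.antidiagonal_zero,
      Finset.sum_singleton]
    rw [RowS_zero_succ, RowS_succ_zero]
    abel
  | succ m =>
    rw [RhsS, Finset.Nat.sum_antidiagonal_succ]
    rw [Finset.Nat.sum_antidiagonal_succ' (f := fun p => RowS G (p.1 + 1) p.2)]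
    have e1 : ∀ q ∈ Finset.HasAntidiagonal.antidiagonal m, RowS G (q.1 + 1) (q.2 + 1) =
        RowS (fun v => G (1 :: v)) q.1 (q.2 + 1) +
          (RowS (fun v => G (0 :: v)) (q.1 + 1) q.2 + RowS (fun v => G (2 :: v)) (q.1 + 1) q.2) :=
      fun q _ => RowS_succ_succ G q.1 q.2
    rw [Finset.sum_congr rfl e1, Finset.sum_add_distrib, Finset.sum_add_distrib]
    rw [show RhsS (fun v => G (1 :: v)) (m + 1) = _ from
        Finset.Nat.sum_antidiagonal_succ' (f := fun p => RowS (fun v => G (1 :: v)) p.1 p.2),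
      show RhsS (fun v => G (0 :: v)) (m + 1) = _ from
        Finset.Nat.sum_antidiagonal_succ (f := fun p => RowS (fun v => G (0 :: v)) p.1 p.2),
      show RhsS (fun v => G (2 :: v)) (m + 1) = _ from
        Finset.Nat.sum_antidiagonal_succ (f := fun p => RowS (fun v => G (2 :: v)) p.1 p.2)]
    rw [RowS_zero_succ, RowS_succ_zero]
    abel

lemma LhsS_succ (G : Word 3 → M) (n : ℕ) :
    LhsS G (n + 1) = LhsS (fun v => G (1 :: v)) n +
      (LhsS (fun v => G (0 :: v)) n + LhsS (fun v => G (2 :: v)) n) := by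
  simp only [LhsS, wordsL, List.map_append, List.sum_append, List.map_map]
  have h0 : ((fun u => ((expand u).map G).sum) ∘ (List.cons (0 : Fin 2))) =
      fun u => ((expand u).map (fun v => G (0 :: v))).sum +
        ((expand u).map (fun v => G (1 :: v))).sum := by
    funext u
    simp only [Function.comp_apply]
    rw [expand_zero_cons]
    simp [List.sum_append, List.map_map, Function.comp_def]
  have h1 : ((fun u => ((expand u).map G).sum) ∘ (List.cons (1 : Fin 2))) =
      fun u => ((expand u).map (fun v => G (2 :: v))).sum := by
    funext u
    simp only [Function.comp_apply]
    rw [expand_one_cons]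
    simp [List.map_map, Function.comp_def]
  rw [h0, h1, sum_map_add]
  abel

theorem key2 (n : ℕ) : ∀ (G : Word 3 → M), LhsS G n = RhsS G n := by
  induction n with
  | zero =>
    intro G
    simp [LhsS, RhsS, RowS, ShS, wordsL, expand, shuffle, Finset.Nat.antidiagonal_zero]
  | succ n ih =>
    intro G
    rw [LhsS_succ, RhsS_succ, ih, ih, ih]

end Key

end Aux13

namespace Aux13

open List

section Phi

variable {k : Type*} [Field k] [CharZero k]

lemma shuffle_single_repl (s : ℕ) :
    shuffle [(0 : Fin 2)] (List.replicate s 0) =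
      List.replicate (s + 1) (List.replicate (s + 1) 0) := by
  induction s with
  | zero => simp [shuffle]
  | succ s ih =>
    rw [List.replicate_succ, shuffle, ih]
    simp [shuffle, List.map_replicate, List.replicate_succ]

lemma phi_repl (φ : NC k 2) (hLie : IsLieLike φ) (h0 : φ [0] = 0) :
    ∀ s, φ (List.replicate (s + 1) 0) = 0 := by
  intro s
  induction s with
  | zero => simpa using h0
  | succ s ih =>
    have h := hLie.2 [0] (List.replicate (s + 1) 0) (by simp) (by simp)
    rw [shuffle_single_repl, List.map_replicate, List.sum_replicate] at h
    rw [nsmul_eq_mul] at h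
    rcases mul_eq_zero.mp h with h' | h'
    · exact absurd h' (by exact_mod_cast Nat.succ_ne_zero (s + 1))
    · exact h'

lemma shuffle_phi_zero (φ : NC k 2) (hLie : IsLieLike φ) (h0 : φ [0] = 0) (s : ℕ) (r : Word 2) :
    ((shuffle (List.replicate (s + 1) (0 : Fin 2)) r).map φ).sum = 0 := by
  cases r with
  | nil => rw [shuffle_nil_right]; simpa using phi_repl φ hLie h0 s
  | cons x r' => exact hLie.2 _ _ (by simp) (by simp)

end Phi

section Prod

variable {A : Type*} [Ring A]

/-- word product in two letters -/
def prodW (a b : A) (u : Word 2) : A := (u.map ![a, b]).prod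

/-- word product in three letters -/
def prodV (a c b : A) (v : Word 3) : A := (v.map ![a, c, b]).prod

lemma vec3_emb2 (a c b : A) (x : Fin 2) : ![a, c, b] (emb2 x) = ![a, b] x := by
  by_cases hx : x = 0
  · subst hx; rw [emb2_zero]; rfl
  · have hx1 : x = 1 := by omega
    subst hx1; rw [emb2_one]; rfl

lemma prodV_emb (a c b : A) (r : Word 2) : prodV a c b (r.map emb2) = prodW a b r := by
  unfold prodV prodW
  rw [List.map_map]
  congr 1
  apply List.map_congr_left
  intro x _
  exact vec3_emb2 a c b x

lemma prodV_repl (a c b : A) (s : ℕ) : prodV a c b (List.replicate s 1) = c ^ s := by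
  unfold prodV
  rw [List.map_replicate]
  simp [List.prod_replicate]

lemma prodV_cons (a c b : A) (y : Fin 3) (v : Word 3) :
    prodV a c b (y :: v) = ![a, c, b] y * prodV a c b v := by
  simp [prodV]

lemma prodW_cons (a b : A) (x : Fin 2) (u : Word 2) :
    prodW a b (x :: u) = ![a, b] x * prodW a b u := by
  simp [prodW]

theorem sh_prod (a b c : A) (hca : Commute c a) (hcb : Commute c b) :
    ∀ (s : ℕ) (r : Word 2) (v : Word 3), v ∈ shuffle (List.replicate s 1) (r.map emb2) →
      prodV a c b v = c ^ s * prodW a b r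
  | 0, r, v, hv => by
    rw [List.replicate_zero, shuffle] at hv
    rw [List.mem_singleton] at hv
    subst hv
    rw [prodV_emb, pow_zero, one_mul]
  | s + 1, [], v, hv => by
    rw [List.map_nil, shuffle_nil_right, List.mem_singleton] at hv
    subst hv
    rw [prodV_repl]
    simp [prodW]
  | s + 1, x :: r', v, hv => by
    rw [List.map_cons, List.replicate_succ, shuffle] at hv
    rcases List.mem_append.mp hv with h | h
    · rcases List.mem_map.mp h with ⟨w, hw, rfl⟩
      have ih := sh_prod a b c hca hcb s (x :: r') w (by rw [List.map_cons]; exact hw)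
      rw [prodV_cons, ih]
      show c * (c ^ s * prodW a b (x :: r')) = _
      rw [← mul_assoc, ← pow_succ']
    · rcases List.mem_map.mp h with ⟨w, hw, rfl⟩
      have ih := sh_prod a b c hca hcb (s + 1) r' w (by rw [List.replicate_succ]; exact hw)
      rw [prodV_cons, vec3_emb2, ih, prodW_cons]
      have hcx : Commute (c ^ (s + 1)) (![a, b] x) := by
        by_cases hx : x = 0
        · subst hx; simpa using hca.pow_left (s + 1)
        · have hx1 : x = 1 := by omega
          subst hx1; simpa using hcb.pow_left (s + 1)
      rw [← mul_assoc, ← hcx.eq, mul_assoc]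
  termination_by s r v => s + r.length
  decreasing_by all_goals simp +arith +decide

lemma prodW_expand (a b c : A) (u : Word 2) :
    prodW (a + c) b u = ((expand u).map (prodV a c b)).sum := by
  induction u with
  | nil => simp [prodW, prodV, expand]
  | cons x u ih =>
    by_cases hx : x = 0
    · subst hx
      rw [expand_zero_cons, prodW_cons, List.map_append, List.sum_append,
        List.map_map, List.map_map]
      have e0 : (prodV a c b ∘ List.cons (0 : Fin 3)) = fun v => a * prodV a c b v := by
        funext v; simp [Function.comp_apply, prodV_cons]
      have e1 : (prodV a c b ∘ List.cons (1 : Fin 3)) = fun v => c * prodV a c b v := by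
        funext v; simp [Function.comp_apply, prodV_cons]
      rw [e0, e1, List.sum_map_mul_left, List.sum_map_mul_left, ← ih]
      show (a + c) * prodW (a + c) b u = _
      rw [add_mul]
    · have hx1 : x = 1 := by omega
      subst hx1
      rw [expand_one_cons, prodW_cons, List.map_map]
      have e2 : (prodV a c b ∘ List.cons (2 : Fin 3)) = fun v => b * prodV a c b v := by
        funext v; simp [Function.comp_apply, prodV_cons]
      rw [e2, List.sum_map_mul_left, ← ih]
      show b * prodW (a + c) b u = _
      rfl

end Prod

end Aux13

namespace Aux13

open List

section Ev

variable {k : Type*} [Field k] [CharZero k] {A : Type*} [Ring A] [Algebra k A]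

/-- The degree-`n` evaluation of `φ` at `(a, b)`. -/
noncomputable def ev (φ : NC k 2) (a b : A) (n : ℕ) : A :=
  ∑ u : Fin n → Fin 2, φ (List.ofFn u) • ((List.ofFn u).map ![a, b]).prod

lemma ev_eq_words (φ : NC k 2) (a b : A) (n : ℕ) :
    ev φ a b n = ((wordsL n).map fun u => φ u • prodW a b u).sum :=
  sum_ofFn_eq n (fun u => φ u • prodW a b u)

theorem ev_add_c (φ : NC k 2) (hLie : IsLieLike φ) (h0 : φ [0] = 0) (a b c : A)
    (hca : Commute c a) (hcb : Commute c b) (n : ℕ) :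
    ev φ (a + c) b n = ev φ a b n := by
  rw [ev_eq_words, ev_eq_words]
  have hexp : ∀ u : Word 2, φ u • prodW (a + c) b u =
      ((expand u).map fun v => φ (v.map pr3) • prodV a c b v).sum := by
    intro u
    rw [prodW_expand, List.smul_sum, List.map_map]
    apply congrArg List.sum
    apply List.map_congr_left
    intro v hv
    simp only [Function.comp_apply]
    rw [map_pr3_of_mem_expand u v hv]
  rw [List.map_congr_left (fun u _ => hexp u)]
  have hL : ((wordsL n).map fun u =>
      ((expand u).map fun v => φ (v.map pr3) • prodV a c b v).sum).sum =
      LhsS (fun v => φ (v.map pr3) • prodV a c b v) n := rfl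
  rw [hL, key2, RhsS]
  rw [Finset.sum_eq_single_of_mem (0, n)
    (by simp [Finset.HasAntidiagonal.mem_antidiagonal]) ?side]
  case side =>
    intro p hp hne
    have hmem := Finset.HasAntidiagonal.mem_antidiagonal.mp hp
    obtain ⟨s, hs⟩ : ∃ s, p.1 = s + 1 := by
      cases hp1 : p.1 with
      | zero =>
        exact absurd (Prod.ext hp1 (by omega)) hne
      | succ s => exact ⟨s, rfl⟩
    rw [RowS]
    rw [List.map_congr_left (g := fun _ => (0 : A)) (fun r _ => ?_), sum_map_zero']
    rw [hs, ShS]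
    rw [List.map_congr_left (g := fun v =>
        φ (v.map pr3) • (c ^ (s + 1) * prodW a b r)) (fun v hv => ?_)]
    · rw [sum_map_smul]
      have hco : ((shuffle (List.replicate (s + 1) 1) (r.map emb2)).map
          fun v => φ (v.map pr3)).sum = 0 := by
        have : ((shuffle (List.replicate (s + 1) 1) (r.map emb2)).map
            fun v => φ (v.map pr3)) =
            ((shuffle (List.replicate (s + 1) 1) (r.map emb2)).map (List.map pr3)).map φ := by
          rw [List.map_map]; rfl
        rw [this, shuffle_map, List.map_replicate, pr3_one, map_pr3_emb2]
        exact shuffle_phi_zero φ hLie h0 s r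
      rw [hco, zero_smul]
    · rw [sh_prod a b c hca hcb (s + 1) r v hv]
  -- main term
  rw [RowS]
  apply congrArg List.sum
  apply List.map_congr_left
  intro r _
  rw [ShS_zero, map_pr3_emb2, prodV_emb]

lemma ev_swap (φ : NC k 2) (h2 : ∀ w : Word 2, φ (w.map ![1, 0]) = -φ w)
    (a b : A) (n : ℕ) : ev φ b a n = -ev φ a b n := by
  unfold ev
  have hinv : Function.Involutive (fun u : Fin n → Fin 2 => ![(1 : Fin 2), 0] ∘ u) := by
    intro u
    funext i
    have : ∀ y : Fin 2, ![(1 : Fin 2), 0] (![(1 : Fin 2), 0] y) = y := by decide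
    exact this (u i)
  rw [← Equiv.sum_comp (Function.Involutive.toPerm _ hinv)
    (fun u => φ (List.ofFn u) • ((List.ofFn u).map ![b, a]).prod)]
  rw [← Finset.sum_neg_distrib]
  apply Finset.sum_congr rfl
  intro u _
  have he : (Function.Involutive.toPerm _ hinv) u = ![(1 : Fin 2), 0] ∘ u := rfl
  rw [he]
  have h1 : List.ofFn (![(1 : Fin 2), 0] ∘ u) = (List.ofFn u).map ![1, 0] := by
    rw [List.map_ofFn]
  rw [h1, h2]
  have h3 : ((List.ofFn u).map ![(1 : Fin 2), 0]).map ![b, a] = (List.ofFn u).map ![a, b] := by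
    rw [List.map_map]
    have hfun : (![b, a] ∘ ![(1 : Fin 2), 0]) = ![a, b] := by
      funext x
      fin_cases x <;> rfl
    rw [hfun]
  rw [h3, neg_smul]

lemma ev_snd (φ : NC k 2) (hLie : IsLieLike φ) (h0 : φ [0] = 0)
    (h2 : ∀ w : Word 2, φ (w.map ![1, 0]) = -φ w) (a b c : A)
    (hca : Commute c a) (hcb : Commute c b) (n : ℕ) :
    ev φ a (b + c) n = ev φ a b n := by
  rw [ev_swap φ h2 (b + c) a n, ev_add_c φ hLie h0 b a c hcb hca n,
    ev_swap φ h2 b a n]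

end Ev

end Aux13

namespace Aux13

section PS

variable {k : Type*} [Field k] [CharZero k] {A : Type*} [Ring A] [Algebra k A]

lemma neg_lin_sub (a b : A) : -lin a - lin b = lin (-a - b) := by
  apply PowerSeries.ext
  intro n
  rw [map_sub, map_neg]
  simp only [lin, PowerSeries.coeff_mk]
  split <;> simp

lemma coeff_linProd (n : ℕ) (l : List A) :
    PowerSeries.coeff (R := A) n ((l.map lin).prod) = if l.length = n then l.prod else 0 := by
  induction l generalizing n with
  | nil =>
    simp only [List.map_nil, List.prod_nil, PowerSeries.coeff_one, List.length_nil]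
    simp [eq_comm]
  | cons x l ih =>
    rw [List.map_cons, List.prod_cons, PowerSeries.coeff_mul]
    cases n with
    | zero =>
      simp [lin, PowerSeries.coeff_mk, Finset.Nat.antidiagonal_zero]
    | succ n =>
      rw [Finset.sum_eq_single_of_mem (1, n)
        (by rw [Finset.HasAntidiagonal.mem_antidiagonal]; omega) ?side]
      case side =>
        intro p hp hne
        have hmem := Finset.HasAntidiagonal.mem_antidiagonal.mp hp
        have hp1 : p.1 ≠ 1 := by
          intro h1
          exact hne (Prod.ext h1 (by omega))
        simp [lin, PowerSeries.coeff_mk, hp1]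
      rw [ih n]
      simp only [lin, PowerSeries.coeff_mk, if_pos rfl, List.length_cons, List.prod_cons]
      rw [mul_ite, mul_zero]
      congr 1
      simp [Nat.succ_inj]
  
lemma map_lin_pair (a b : A) (w : Word 2) :
    w.map ![lin a, lin b] = (w.map ![a, b]).map lin := by
  rw [List.map_map]
  have hfun : (lin ∘ ![a, b]) = ![lin a, lin b] := by
    funext x
    fin_cases x <;> rfl
  rw [hfun]

lemma coeff_substPS_lin (φ : NC k 2) (a b : A) (n : ℕ) :
    PowerSeries.coeff (R := A) n (substPS φ (lin a) (lin b)) = ev φ a b n := by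
  rw [substPS, PowerSeries.coeff_mk]
  rw [Finset.sum_eq_single_of_mem n (Finset.self_mem_range_succ n) ?side]
  case side =>
    intro m _ hne
    apply Finset.sum_eq_zero
    intro u _
    rw [map_lin_pair, coeff_linProd]
    simp [hne]
  apply Finset.sum_congr rfl
  intro u _
  rw [map_lin_pair, coeff_linProd]
  simp

end PS

section XgLemmas

variable (k : Type*) [Field k] [CharZero k]

lemma Xg_symm (i j : Fin 5) : Xg k i j = Xg k j i :=
  RingQuot.mkAlgHom_rel k (P5Rel.symm i j)

lemma Xg_diag (i : Fin 5) : Xg k i i = 0 := by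
  have h := RingQuot.mkAlgHom_rel k (P5Rel.diag (k := k) i)
  rw [map_zero] at h
  exact h

lemma Xg_row (i : Fin 5) : ∑ j : Fin 5, Xg k i j = 0 := by
  have h := RingQuot.mkAlgHom_rel k (P5Rel.rowsum (k := k) i)
  rw [map_sum, map_zero] at h
  exact h

lemma row5 (c : Fin 5) :
    Xg k c 0 + Xg k c 1 + Xg k c 2 + Xg k c 3 + Xg k c 4 = 0 := by
  have h := Xg_row k c
  rwa [Fin.sum_univ_five] at h

lemma Xg_commute (i j l m : Fin 5) (h1 : i ≠ l) (h2 : i ≠ m) (h3 : j ≠ l) (h4 : j ≠ m) :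
    Commute (Xg k i j) (Xg k l m) := by
  have h := RingQuot.mkAlgHom_rel k (P5Rel.disj (k := k) i j l m ⟨h1, h2, h3, h4⟩)
  rw [map_mul, map_mul] at h
  exact h

lemma comm3 (a b c d e : Fin 5)
    (hrow : Xg k c a + Xg k c b + Xg k c d + Xg k c e = 0)
    (h1 : Commute (Xg k a b) (Xg k c d)) (h2 : Commute (Xg k a b) (Xg k c e)) :
    Commute (Xg k a b) (Xg k a c + Xg k b c) := by
  have hsum : Xg k a c + Xg k b c = -Xg k c d + -Xg k c e := by
    rw [Xg_symm k a c, Xg_symm k b c, ← sub_eq_zero]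
    have h3 : Xg k c a + Xg k c b - (-Xg k c d + -Xg k c e) =
        Xg k c a + Xg k c b + Xg k c d + Xg k c e := by abel
    rw [h3, hrow]
  rw [hsum]
  exact (h1.neg_right).add_right (h2.neg_right)

end XgLemmas

end Aux13

/-- With `σ₁ = id`, `σ₂(12345) = (54231)`, `σ₃(12345) = (13425)`,
`σ₄(12345) = (43125)`, and `φ` commutator Lie-like satisfying the 2-cycle
relation, one has
`Σ_{i=1}^4 σᵢ(P) = R(X₂₁,X₂₃) + R(X₂₁,X₂₅) + R(X₂₄,X₂₃) + R(X₂₄,X₂₅)`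
in `𝔓₅` (strings `1,…,5` indexed by `0,…,4`). -/
theorem statement13 (k : Type*) [Field k] [CharZero k] (φ : NC k 2)
    (hLie : IsLieLike φ) (hcomm : φ [0] = 0 ∧ φ [1] = 0)
    (h2 : ∀ w : Word 2, φ (w.map ![1, 0]) = -φ w) :
    Pt k φ 0 1 2 3 4 + Pt k φ 4 3 1 2 0 + Pt k φ 0 2 3 1 4 + Pt k φ 3 2 0 1 4 =
      Rdef k φ (Xg k 1 0) (Xg k 1 2) + Rdef k φ (Xg k 1 0) (Xg k 1 4) +
        Rdef k φ (Xg k 1 3) (Xg k 1 2) + Rdef k φ (Xg k 1 3) (Xg k 1 4) := by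
  obtain ⟨h0, _h1⟩ := hcomm
  refine PowerSeries.ext fun n => ?_
  unfold Pt S5 Rdef
  simp only [Aux13.neg_lin_sub, map_add, Aux13.coeff_substPS_lin]
  simp only [Aux13.Xg_symm k 1 0, Aux13.Xg_symm k 4 3, Aux13.Xg_symm k 3 1,
    Aux13.Xg_symm k 2 0, Aux13.Xg_symm k 4 0, Aux13.Xg_symm k 3 2]
  -- commuting triangles
  have q1 : Commute (Xg k 0 1) (Xg k 0 2 + Xg k 1 2) :=
    Aux13.comm3 k 0 1 2 3 4
      (by have h := Aux13.row5 k 2; rw [Aux13.Xg_diag k 2] at h; rw [← h]; abel)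
      (Aux13.Xg_commute k 0 1 2 3 (by decide) (by decide) (by decide) (by decide))
      (Aux13.Xg_commute k 0 1 2 4 (by decide) (by decide) (by decide) (by decide))
  have q2 : Commute (Xg k 0 2) (Xg k 0 1 + Xg k 2 1) :=
    Aux13.comm3 k 0 2 1 3 4
      (by have h := Aux13.row5 k 1; rw [Aux13.Xg_diag k 1] at h; rw [← h]; abel)
      (Aux13.Xg_commute k 0 2 1 3 (by decide) (by decide) (by decide) (by decide))
      (Aux13.Xg_commute k 0 2 1 4 (by decide) (by decide) (by decide) (by decide))
  have q3 : Commute (Xg k 1 2) (Xg k 1 0 + Xg k 2 0) :=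
    Aux13.comm3 k 1 2 0 3 4
      (by have h := Aux13.row5 k 0; rw [Aux13.Xg_diag k 0] at h; rw [← h]; abel)
      (Aux13.Xg_commute k 1 2 0 3 (by decide) (by decide) (by decide) (by decide))
      (Aux13.Xg_commute k 1 2 0 4 (by decide) (by decide) (by decide) (by decide))
  have q4 : Commute (Xg k 0 1) (Xg k 0 4 + Xg k 1 4) :=
    Aux13.comm3 k 0 1 4 2 3
      (by have h := Aux13.row5 k 4; rw [Aux13.Xg_diag k 4] at h; rw [← h]; abel)
      (Aux13.Xg_commute k 0 1 4 2 (by decide) (by decide) (by decide) (by decide))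
      (Aux13.Xg_commute k 0 1 4 3 (by decide) (by decide) (by decide) (by decide))
  have q5 : Commute (Xg k 0 4) (Xg k 0 1 + Xg k 4 1) :=
    Aux13.comm3 k 0 4 1 2 3
      (by have h := Aux13.row5 k 1; rw [Aux13.Xg_diag k 1] at h; rw [← h]; abel)
      (Aux13.Xg_commute k 0 4 1 2 (by decide) (by decide) (by decide) (by decide))
      (Aux13.Xg_commute k 0 4 1 3 (by decide) (by decide) (by decide) (by decide))
  have q6 : Commute (Xg k 1 4) (Xg k 1 0 + Xg k 4 0) :=
    Aux13.comm3 k 1 4 0 2 3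
      (by have h := Aux13.row5 k 0; rw [Aux13.Xg_diag k 0] at h; rw [← h]; abel)
      (Aux13.Xg_commute k 1 4 0 2 (by decide) (by decide) (by decide) (by decide))
      (Aux13.Xg_commute k 1 4 0 3 (by decide) (by decide) (by decide) (by decide))
  have q7 : Commute (Xg k 1 2) (Xg k 1 3 + Xg k 2 3) :=
    Aux13.comm3 k 1 2 3 0 4
      (by have h := Aux13.row5 k 3; rw [Aux13.Xg_diag k 3] at h; rw [← h]; abel)
      (Aux13.Xg_commute k 1 2 3 0 (by decide) (by decide) (by decide) (by decide))
      (Aux13.Xg_commute k 1 2 3 4 (by decide) (by decide) (by decide) (by decide))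
  have q8 : Commute (Xg k 1 3) (Xg k 1 2 + Xg k 3 2) :=
    Aux13.comm3 k 1 3 2 0 4
      (by have h := Aux13.row5 k 2; rw [Aux13.Xg_diag k 2] at h; rw [← h]; abel)
      (Aux13.Xg_commute k 1 3 2 0 (by decide) (by decide) (by decide) (by decide))
      (Aux13.Xg_commute k 1 3 2 4 (by decide) (by decide) (by decide) (by decide))
  have q9 : Commute (Xg k 2 3) (Xg k 2 1 + Xg k 3 1) :=
    Aux13.comm3 k 2 3 1 0 4
      (by have h := Aux13.row5 k 1; rw [Aux13.Xg_diag k 1] at h; rw [← h]; abel)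
      (Aux13.Xg_commute k 2 3 1 0 (by decide) (by decide) (by decide) (by decide))
      (Aux13.Xg_commute k 2 3 1 4 (by decide) (by decide) (by decide) (by decide))
  have q10 : Commute (Xg k 1 3) (Xg k 1 4 + Xg k 3 4) :=
    Aux13.comm3 k 1 3 4 0 2
      (by have h := Aux13.row5 k 4; rw [Aux13.Xg_diag k 4] at h; rw [← h]; abel)
      (Aux13.Xg_commute k 1 3 4 0 (by decide) (by decide) (by decide) (by decide))
      (Aux13.Xg_commute k 1 3 4 2 (by decide) (by decide) (by decide) (by decide))
  have q11 : Commute (Xg k 1 4) (Xg k 1 3 + Xg k 4 3) :=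
    Aux13.comm3 k 1 4 3 0 2
      (by have h := Aux13.row5 k 3; rw [Aux13.Xg_diag k 3] at h; rw [← h]; abel)
      (Aux13.Xg_commute k 1 4 3 0 (by decide) (by decide) (by decide) (by decide))
      (Aux13.Xg_commute k 1 4 3 2 (by decide) (by decide) (by decide) (by decide))
  have q12 : Commute (Xg k 3 4) (Xg k 3 1 + Xg k 4 1) :=
    Aux13.comm3 k 3 4 1 0 2
      (by have h := Aux13.row5 k 1; rw [Aux13.Xg_diag k 1] at h; rw [← h]; abel)
      (Aux13.Xg_commute k 3 4 1 0 (by decide) (by decide) (by decide) (by decide))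
      (Aux13.Xg_commute k 3 4 1 2 (by decide) (by decide) (by decide) (by decide))
  have t012_01 : Commute (Xg k 0 1 + Xg k 0 2 + Xg k 1 2) (Xg k 0 1) := by
    have e : Xg k 0 1 + Xg k 0 2 + Xg k 1 2 = Xg k 0 1 + (Xg k 0 2 + Xg k 1 2) := by abel
    rw [e]; exact ((Commute.refl (Xg k 0 1)).add_right q1).symm
  have t012_02 : Commute (Xg k 0 1 + Xg k 0 2 + Xg k 1 2) (Xg k 0 2) := by
    have e : Xg k 0 1 + Xg k 0 2 + Xg k 1 2 = Xg k 0 2 + (Xg k 0 1 + Xg k 2 1) := by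
      rw [Aux13.Xg_symm k 2 1]; abel
    rw [e]; exact ((Commute.refl (Xg k 0 2)).add_right q2).symm
  have t012_12 : Commute (Xg k 0 1 + Xg k 0 2 + Xg k 1 2) (Xg k 1 2) := by
    have e : Xg k 0 1 + Xg k 0 2 + Xg k 1 2 = Xg k 1 2 + (Xg k 1 0 + Xg k 2 0) := by
      rw [Aux13.Xg_symm k 1 0, Aux13.Xg_symm k 2 0]; abel
    rw [e]; exact ((Commute.refl (Xg k 1 2)).add_right q3).symm
  have t014_01 : Commute (Xg k 0 1 + Xg k 0 4 + Xg k 1 4) (Xg k 0 1) := by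
    have e : Xg k 0 1 + Xg k 0 4 + Xg k 1 4 = Xg k 0 1 + (Xg k 0 4 + Xg k 1 4) := by abel
    rw [e]; exact ((Commute.refl (Xg k 0 1)).add_right q4).symm
  have t014_04 : Commute (Xg k 0 1 + Xg k 0 4 + Xg k 1 4) (Xg k 0 4) := by
    have e : Xg k 0 1 + Xg k 0 4 + Xg k 1 4 = Xg k 0 4 + (Xg k 0 1 + Xg k 4 1) := by
      rw [Aux13.Xg_symm k 4 1]; abel
    rw [e]; exact ((Commute.refl (Xg k 0 4)).add_right q5).symm
  have t014_14 : Commute (Xg k 0 1 + Xg k 0 4 + Xg k 1 4) (Xg k 1 4) := by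
    have e : Xg k 0 1 + Xg k 0 4 + Xg k 1 4 = Xg k 1 4 + (Xg k 1 0 + Xg k 4 0) := by
      rw [Aux13.Xg_symm k 1 0, Aux13.Xg_symm k 4 0]; abel
    rw [e]; exact ((Commute.refl (Xg k 1 4)).add_right q6).symm
  have t123_12 : Commute (Xg k 1 2 + Xg k 1 3 + Xg k 2 3) (Xg k 1 2) := by
    have e : Xg k 1 2 + Xg k 1 3 + Xg k 2 3 = Xg k 1 2 + (Xg k 1 3 + Xg k 2 3) := by abel
    rw [e]; exact ((Commute.refl (Xg k 1 2)).add_right q7).symm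
  have t123_13 : Commute (Xg k 1 2 + Xg k 1 3 + Xg k 2 3) (Xg k 1 3) := by
    have e : Xg k 1 2 + Xg k 1 3 + Xg k 2 3 = Xg k 1 3 + (Xg k 1 2 + Xg k 3 2) := by
      rw [Aux13.Xg_symm k 3 2]; abel
    rw [e]; exact ((Commute.refl (Xg k 1 3)).add_right q8).symm
  have t123_23 : Commute (Xg k 1 2 + Xg k 1 3 + Xg k 2 3) (Xg k 2 3) := by
    have e : Xg k 1 2 + Xg k 1 3 + Xg k 2 3 = Xg k 2 3 + (Xg k 2 1 + Xg k 3 1) := by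
      rw [Aux13.Xg_symm k 2 1, Aux13.Xg_symm k 3 1]; abel
    rw [e]; exact ((Commute.refl (Xg k 2 3)).add_right q9).symm
  have t134_13 : Commute (Xg k 1 3 + Xg k 1 4 + Xg k 3 4) (Xg k 1 3) := by
    have e : Xg k 1 3 + Xg k 1 4 + Xg k 3 4 = Xg k 1 3 + (Xg k 1 4 + Xg k 3 4) := by abel
    rw [e]; exact ((Commute.refl (Xg k 1 3)).add_right q10).symm
  have t134_14 : Commute (Xg k 1 3 + Xg k 1 4 + Xg k 3 4) (Xg k 1 4) := by
    have e : Xg k 1 3 + Xg k 1 4 + Xg k 3 4 = Xg k 1 4 + (Xg k 1 3 + Xg k 4 3) := by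
      rw [Aux13.Xg_symm k 4 3]; abel
    rw [e]; exact ((Commute.refl (Xg k 1 4)).add_right q11).symm
  have t134_34 : Commute (Xg k 1 3 + Xg k 1 4 + Xg k 3 4) (Xg k 3 4) := by
    have e : Xg k 1 3 + Xg k 1 4 + Xg k 3 4 = Xg k 3 4 + (Xg k 3 1 + Xg k 4 1) := by
      rw [Aux13.Xg_symm k 3 1, Aux13.Xg_symm k 4 1]; abel
    rw [e]; exact ((Commute.refl (Xg k 3 4)).add_right q12).symm
  -- swap rewrites
  have w1 : Aux13.ev φ (Xg k 3 4) (Xg k 2 3) n = -Aux13.ev φ (Xg k 2 3) (Xg k 3 4) n :=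
    Aux13.ev_swap φ h2 (Xg k 2 3) (Xg k 3 4) n
  have w2 : Aux13.ev φ (Xg k 0 4) (Xg k 3 4) n = -Aux13.ev φ (Xg k 3 4) (Xg k 0 4) n :=
    Aux13.ev_swap φ h2 (Xg k 3 4) (Xg k 0 4) n
  have w3 : Aux13.ev φ (Xg k 2 3) (Xg k 0 2) n = -Aux13.ev φ (Xg k 0 2) (Xg k 2 3) n :=
    Aux13.ev_swap φ h2 (Xg k 0 2) (Xg k 2 3) n
  have w4 : Aux13.ev φ (Xg k 0 4) (Xg k 0 2) n = -Aux13.ev φ (Xg k 0 2) (Xg k 0 4) n :=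
    Aux13.ev_swap φ h2 (Xg k 0 2) (Xg k 0 4) n
  -- matches
  have m1 : Aux13.ev φ (Xg k 1 2) (-Xg k 0 1 - Xg k 1 2) n
      = Aux13.ev φ (Xg k 1 2) (Xg k 0 2) n := by
    have e : -Xg k 0 1 - Xg k 1 2 = Xg k 0 2 + -(Xg k 0 1 + Xg k 0 2 + Xg k 1 2) := by abel
    rw [e]
    exact Aux13.ev_snd φ hLie h0 h2 (Xg k 1 2) (Xg k 0 2) _ t012_12.neg_left t012_02.neg_left n
  have m2 : Aux13.ev φ (-Xg k 0 1 - Xg k 1 2) (Xg k 0 1) n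
      = Aux13.ev φ (Xg k 0 2) (Xg k 0 1) n := by
    have e : -Xg k 0 1 - Xg k 1 2 = Xg k 0 2 + -(Xg k 0 1 + Xg k 0 2 + Xg k 1 2) := by abel
    rw [e]
    exact Aux13.ev_add_c φ hLie h0 (Xg k 0 2) (Xg k 0 1) _ t012_02.neg_left t012_01.neg_left n
  have m3 : Aux13.ev φ (Xg k 1 4) (-Xg k 0 1 - Xg k 1 4) n
      = Aux13.ev φ (Xg k 1 4) (Xg k 0 4) n := by
    have e : -Xg k 0 1 - Xg k 1 4 = Xg k 0 4 + -(Xg k 0 1 + Xg k 0 4 + Xg k 1 4) := by abel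
    rw [e]
    exact Aux13.ev_snd φ hLie h0 h2 (Xg k 1 4) (Xg k 0 4) _ t014_14.neg_left t014_04.neg_left n
  have m4 : Aux13.ev φ (-Xg k 0 1 - Xg k 1 4) (Xg k 0 1) n
      = Aux13.ev φ (Xg k 0 4) (Xg k 0 1) n := by
    have e : -Xg k 0 1 - Xg k 1 4 = Xg k 0 4 + -(Xg k 0 1 + Xg k 0 4 + Xg k 1 4) := by abel
    rw [e]
    exact Aux13.ev_add_c φ hLie h0 (Xg k 0 4) (Xg k 0 1) _ t014_04.neg_left t014_01.neg_left n
  have m5 : Aux13.ev φ (Xg k 1 2) (-Xg k 1 3 - Xg k 1 2) n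
      = Aux13.ev φ (Xg k 1 2) (Xg k 2 3) n := by
    have e : -Xg k 1 3 - Xg k 1 2 = Xg k 2 3 + -(Xg k 1 2 + Xg k 1 3 + Xg k 2 3) := by abel
    rw [e]
    exact Aux13.ev_snd φ hLie h0 h2 (Xg k 1 2) (Xg k 2 3) _ t123_12.neg_left t123_23.neg_left n
  have m6 : Aux13.ev φ (-Xg k 1 3 - Xg k 1 2) (Xg k 1 3) n
      = Aux13.ev φ (Xg k 2 3) (Xg k 1 3) n := by
    have e : -Xg k 1 3 - Xg k 1 2 = Xg k 2 3 + -(Xg k 1 2 + Xg k 1 3 + Xg k 2 3) := by abel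
    rw [e]
    exact Aux13.ev_add_c φ hLie h0 (Xg k 2 3) (Xg k 1 3) _ t123_23.neg_left t123_13.neg_left n
  have m7 : Aux13.ev φ (Xg k 1 4) (-Xg k 1 3 - Xg k 1 4) n
      = Aux13.ev φ (Xg k 1 4) (Xg k 3 4) n := by
    have e : -Xg k 1 3 - Xg k 1 4 = Xg k 3 4 + -(Xg k 1 3 + Xg k 1 4 + Xg k 3 4) := by abel
    rw [e]
    exact Aux13.ev_snd φ hLie h0 h2 (Xg k 1 4) (Xg k 3 4) _ t134_14.neg_left t134_34.neg_left n
  have m8 : Aux13.ev φ (-Xg k 1 3 - Xg k 1 4) (Xg k 1 3) n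
      = Aux13.ev φ (Xg k 3 4) (Xg k 1 3) n := by
    have e : -Xg k 1 3 - Xg k 1 4 = Xg k 3 4 + -(Xg k 1 3 + Xg k 1 4 + Xg k 3 4) := by abel
    rw [e]
    exact Aux13.ev_add_c φ hLie h0 (Xg k 3 4) (Xg k 1 3) _ t134_34.neg_left t134_13.neg_left n
  rw [w1, w2, w3, w4, m1, m2, m3, m4, m5, m6, m7, m8]
  abel
end
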